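/- arXiv:1507.03833 — 4 statements merged into one kernel-verified Lean document; each statement's English description precedes it below -/
import Mathlib

section
/- Fix τ ∈ (0,1) and κ > 0. The gradient of the smoothed loss, ∇Q̂_{τ,κ}(Γ) = −(mn)^{-1} Xᵀ [[(κmn)^{-1}(Y − XΓ)]]_τ, is Lipschitz continuous in Γ with Lipschitz constant M = (κ m² n²)^{-1}‖X‖²; that is, for all Γ₁, Γ₂ ∈ ℝ^{p×m}, ‖∇Q̂_{τ,κ}(Γ₁) − ∇Q̂_{τ,κ}(Γ₂)‖_F ≤ (κ m² n²)^{-1}‖X‖² ‖Γ₁ − Γ₂‖_F. -/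
open Matrix
open scoped BigOperators

noncomputable section

/-- Frobenius norm. -/
def froNorm {n m : ℕ} (A : Matrix (Fin n) (Fin m) ℝ) : ℝ :=
  Real.sqrt (∑ i, ∑ j, (A i j) ^ 2)

/-- Spectral (operator) norm. -/
def specNorm {n m : ℕ} (A : Matrix (Fin n) (Fin m) ℝ) : ℝ :=
  ‖LinearMap.toContinuousLinearMap (Matrix.toEuclideanLin A)‖

/-- Entrywise clipping [[A]]_τ of a matrix to [τ−1, τ]. -/
def clip (τ : ℝ) {n m : ℕ} (A : Matrix (Fin n) (Fin m) ℝ) : Matrix (Fin n) (Fin m) ℝ :=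
  Matrix.of fun i j => max (τ - 1) (min τ (A i j))

/-- The gradient ∇Q̂_{τ,κ}(Γ) = −(mn)⁻¹Xᵀ[[(κmn)⁻¹(Y − XΓ)]]_τ of the smoothed loss. -/
def gradQsmooth {n m p : ℕ} (τ κ : ℝ) (Y : Matrix (Fin n) (Fin m) ℝ)
    (X : Matrix (Fin n) (Fin p) ℝ) (Γ : Matrix (Fin p) (Fin m) ℝ) :
    Matrix (Fin p) (Fin m) ℝ :=
  (-(((m : ℝ) * n)⁻¹)) • (Xᵀ * clip τ ((((κ * m * n : ℝ))⁻¹) • (Y - X * Γ)))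

lemma froNorm_nonneg {n m : ℕ} (A : Matrix (Fin n) (Fin m) ℝ) : 0 ≤ froNorm A :=
  Real.sqrt_nonneg _

lemma specNorm_nonneg {n m : ℕ} (A : Matrix (Fin n) (Fin m) ℝ) : 0 ≤ specNorm A :=
  norm_nonneg _

lemma froNorm_sq {n m : ℕ} (A : Matrix (Fin n) (Fin m) ℝ) :
    froNorm A ^ 2 = ∑ i, ∑ j, (A i j) ^ 2 := by
  rw [froNorm, Real.sq_sqrt]
  positivity

lemma froNorm_mono {n m : ℕ} (A B : Matrix (Fin n) (Fin m) ℝ)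
    (h : ∀ i j, |A i j| ≤ |B i j|) : froNorm A ≤ froNorm B := by
  apply Real.sqrt_le_sqrt
  apply Finset.sum_le_sum; intro i _
  apply Finset.sum_le_sum; intro j _
  rw [← sq_abs (A i j), ← sq_abs (B i j)]
  exact pow_le_pow_left₀ (abs_nonneg _) (h i j) 2

lemma froNorm_smul {n m : ℕ} (c : ℝ) (A : Matrix (Fin n) (Fin m) ℝ) :
    froNorm (c • A) = |c| * froNorm A := by
  unfold froNorm
  rw [← Real.sqrt_sq_eq_abs, ← Real.sqrt_mul (sq_nonneg c), Finset.mul_sum]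
  congr 1
  apply Finset.sum_congr rfl; intro i _
  rw [Finset.mul_sum]
  apply Finset.sum_congr rfl; intro j _
  simp [Matrix.smul_apply, mul_pow]

lemma froNorm_neg {n m : ℕ} (A : Matrix (Fin n) (Fin m) ℝ) :
    froNorm (-A) = froNorm A := by
  unfold froNorm; simp

/-- Column-wise bound: ‖A * B‖_F ≤ ‖A‖ ‖B‖_F. -/
lemma froNorm_mul_le {n p m : ℕ} (A : Matrix (Fin n) (Fin p) ℝ)
    (B : Matrix (Fin p) (Fin m) ℝ) :
    froNorm (A * B) ≤ specNorm A * froNorm B := by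
  have hAB : 0 ≤ specNorm A * froNorm B :=
    mul_nonneg (specNorm_nonneg A) (froNorm_nonneg B)
  rw [← Real.sqrt_sq hAB, froNorm]
  apply Real.sqrt_le_sqrt
  rw [Finset.sum_comm]
  have key : ∀ j : Fin m, ∑ i, ((A * B) i j) ^ 2 ≤ specNorm A ^ 2 * ∑ i, (B i j) ^ 2 := by
    intro j
    set v : EuclideanSpace ℝ (Fin p) := (WithLp.equiv 2 (Fin p → ℝ)).symm (fun i => B i j) with hv
    have h1 : Matrix.toEuclideanLin A v = (WithLp.equiv 2 (Fin n → ℝ)).symm (A *ᵥ (fun i => B i j)) := by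
      rw [hv]; rfl
    have hnorm : ‖Matrix.toEuclideanLin A v‖ ≤ specNorm A * ‖v‖ := by
      have := (LinearMap.toContinuousLinearMap (Matrix.toEuclideanLin A)).le_opNorm v
      simpa [specNorm] using this
    have h2 : ∑ i, ((A * B) i j) ^ 2 = ‖Matrix.toEuclideanLin A v‖ ^ 2 := by
      rw [h1, EuclideanSpace.norm_eq, Real.sq_sqrt (by positivity)]
      apply Finset.sum_congr rfl; intro i _
      simp [Matrix.mul_apply, Matrix.mulVec, dotProduct]
    have h3 : ‖v‖ ^ 2 = ∑ i, (B i j) ^ 2 := by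
      rw [EuclideanSpace.norm_eq, Real.sq_sqrt (by positivity)]
      apply Finset.sum_congr rfl; intro i _
      simp [hv, sq_abs]
    calc ∑ i, ((A * B) i j) ^ 2 = ‖Matrix.toEuclideanLin A v‖ ^ 2 := h2
      _ ≤ (specNorm A * ‖v‖) ^ 2 := by
          apply pow_le_pow_left₀ (norm_nonneg _) hnorm
      _ = specNorm A ^ 2 * ∑ i, (B i j) ^ 2 := by rw [mul_pow, h3]
  calc ∑ j, ∑ i, ((A * B) i j) ^ 2 ≤ ∑ j, specNorm A ^ 2 * ∑ i, (B i j) ^ 2 :=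
        Finset.sum_le_sum (fun j _ => key j)
    _ = (specNorm A * froNorm B) ^ 2 := by
        rw [← Finset.mul_sum, mul_pow, froNorm_sq, Finset.sum_comm]

lemma specNorm_transpose {n p : ℕ} (A : Matrix (Fin n) (Fin p) ℝ) :
    specNorm Aᵀ = specNorm A := by
  have h : Aᵀ = Aᴴ := by
    ext i j
    simp [Matrix.conjTranspose_apply]
  rw [specNorm, h, Matrix.toEuclideanLin_conjTranspose_eq_adjoint,
    LinearMap.adjoint_toContinuousLinearMap]
  exact LinearIsometryEquiv.norm_map ContinuousLinearMap.adjoint _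

lemma froNorm_clip_sub_clip {n m : ℕ} (τ : ℝ) (A B : Matrix (Fin n) (Fin m) ℝ) :
    froNorm (clip τ A - clip τ B) ≤ froNorm (A - B) := by
  apply froNorm_mono
  intro i j
  simp only [Matrix.sub_apply, clip, Matrix.of_apply]
  calc |max (τ - 1) (min τ (A i j)) - max (τ - 1) (min τ (B i j))|
      ≤ max |τ - 1 - (τ - 1)| |min τ (A i j) - min τ (B i j)| :=
        abs_max_sub_max_le_max _ _ _ _
    _ ≤ |A i j - B i j| := by
        apply max_le
        · simp [abs_nonneg]
        · calc |min τ (A i j) - min τ (B i j)| ≤ max |τ - τ| |A i j - B i j| :=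
              abs_min_sub_min_le_max _ _ _ _
            _ ≤ |A i j - B i j| := by apply max_le <;> simp [abs_nonneg]

/-- the gradient of the smoothed loss is Lipschitz with constant
M = (κm²n²)⁻¹‖X‖². -/
theorem gradQsmooth_lipschitz {n m p : ℕ} (hn : 0 < n) (hm : 0 < m)
    (τ κ : ℝ) (hτ : τ ∈ Set.Ioo (0 : ℝ) 1) (hκ : 0 < κ)
    (Y : Matrix (Fin n) (Fin m) ℝ) (X : Matrix (Fin n) (Fin p) ℝ) :
    ∀ Γ₁ Γ₂ : Matrix (Fin p) (Fin m) ℝ,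
      froNorm (gradQsmooth τ κ Y X Γ₁ - gradQsmooth τ κ Y X Γ₂)
        ≤ (κ * (m : ℝ) ^ 2 * (n : ℝ) ^ 2)⁻¹ * (specNorm X) ^ 2 * froNorm (Γ₁ - Γ₂) := by
  intro Γ₁ Γ₂
  set c : ℝ := (κ * m * n : ℝ)⁻¹ with hc
  set C₁ := clip τ (c • (Y - X * Γ₁))
  set C₂ := clip τ (c • (Y - X * Γ₂))
  have hmn : (0:ℝ) < (m : ℝ) * n := by positivity
  have hcpos : 0 < c := by rw [hc]; positivity
  have hdiff : gradQsmooth τ κ Y X Γ₁ - gradQsmooth τ κ Y X Γ₂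
      = (-(((m : ℝ) * n)⁻¹)) • (Xᵀ * (C₁ - C₂)) := by
    show (-(((m : ℝ) * n)⁻¹)) • (Xᵀ * C₁) - (-(((m : ℝ) * n)⁻¹)) • (Xᵀ * C₂) = _
    rw [← smul_sub, ← Matrix.mul_sub]
  have step1 : froNorm (gradQsmooth τ κ Y X Γ₁ - gradQsmooth τ κ Y X Γ₂)
      = ((m : ℝ) * n)⁻¹ * froNorm (Xᵀ * (C₁ - C₂)) := by
    rw [hdiff, froNorm_smul, abs_neg, abs_of_pos (by positivity)]
  have step2 : froNorm (Xᵀ * (C₁ - C₂)) ≤ specNorm X * froNorm (C₁ - C₂) := by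
    calc froNorm (Xᵀ * (C₁ - C₂)) ≤ specNorm Xᵀ * froNorm (C₁ - C₂) := froNorm_mul_le _ _
      _ = specNorm X * froNorm (C₁ - C₂) := by rw [specNorm_transpose]
  have step3 : froNorm (C₁ - C₂) ≤ c * (specNorm X * froNorm (Γ₁ - Γ₂)) := by
    have h1 : froNorm (C₁ - C₂) ≤ froNorm (c • (Y - X * Γ₁) - c • (Y - X * Γ₂)) :=
      froNorm_clip_sub_clip τ _ _
    have h2 : c • (Y - X * Γ₁) - c • (Y - X * Γ₂) = c • (-(X * (Γ₁ - Γ₂))) := by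
      rw [← smul_sub, Matrix.mul_sub]
      congr 1
      abel
    calc froNorm (C₁ - C₂) ≤ froNorm (c • (-(X * (Γ₁ - Γ₂)))) := by rw [← h2]; exact h1
      _ = c * froNorm (X * (Γ₁ - Γ₂)) := by
          rw [froNorm_smul, abs_of_pos hcpos, froNorm_neg]
      _ ≤ c * (specNorm X * froNorm (Γ₁ - Γ₂)) := by
          apply mul_le_mul_of_nonneg_left (froNorm_mul_le _ _) (le_of_lt hcpos)
  have hfinal : ((m : ℝ) * n)⁻¹ * (specNorm X * (c * (specNorm X * froNorm (Γ₁ - Γ₂))))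
      = (κ * (m : ℝ) ^ 2 * (n : ℝ) ^ 2)⁻¹ * (specNorm X) ^ 2 * froNorm (Γ₁ - Γ₂) := by
    rw [hc]
    field_simp
  calc froNorm (gradQsmooth τ κ Y X Γ₁ - gradQsmooth τ κ Y X Γ₂)
      = ((m : ℝ) * n)⁻¹ * froNorm (Xᵀ * (C₁ - C₂)) := step1
    _ ≤ ((m : ℝ) * n)⁻¹ * (specNorm X * froNorm (C₁ - C₂)) := by
        apply mul_le_mul_of_nonneg_left step2 (by positivity)
    _ ≤ ((m : ℝ) * n)⁻¹ * (specNorm X * (c * (specNorm X * froNorm (Γ₁ - Γ₂)))) := by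
        apply mul_le_mul_of_nonneg_left _ (by positivity)
        exact mul_le_mul_of_nonneg_left step3 (specNorm_nonneg X)
    _ = _ := hfinal
end
end

section
/- Let (X,Y) be a random vector in ℝ^{p+m} such that for each j ≤ m, conditionally on X = x the coordinate Y_j has a density f_{Y_j|X}(·|x) that is differentiable in y with |∂_y f_{Y_j|X}(y|x)| ≤ f̄′ < ∞, and such that xᵀΓ_{*j} is the conditional τ-quantile of Y_j given X = x with inf_j inf_x f_{Y_j|X}(xᵀΓ_{*j}|x) ≥ f̲ > 0. Define ν = (3/8)(f̲/f̄′) · inf over nonzero Δ ∈ K(Γ; 3) of ‖Δ‖_{L2(Π)}³ / (m^{-1} Σ_{j=1}^m E|XᵀΔ_{*j}|³), and assume ν > 0. Then for every Δ ∈ K(Γ; 3) with ‖Δ‖_{L2(Π)} ≤ 4ν, the population loss satisfies Q_τ(Γ + Δ) − Q_τ(Γ) ≥ (1/4) f̲ ‖Δ‖_{L2(Π)}². -/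
open Matrix MeasureTheory
open scoped BigOperators

noncomputable section

/-- The check (pinball) function ρ_τ(u) = u(τ − 1{u ≤ 0}). -/
def checkFn (τ u : ℝ) : ℝ := u * (τ - if u ≤ 0 then 1 else 0)

/-- Nuclear norm: sum of singular values (= sqrt of eigenvalues of AᵀA). -/
def nucNorm {n m : ℕ} (A : Matrix (Fin n) (Fin m) ℝ) : ℝ :=
  ∑ j, Real.sqrt ((Matrix.isHermitian_conjTranspose_mul_self A).eigenvalues j)

/-- ‖S‖_{L2(Π)} = sqrt( m⁻¹ E_Π ‖SᵀX‖₂² ). -/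
def L2Pi {p m : ℕ} (Pix : Measure (Fin p → ℝ)) (S : Matrix (Fin p) (Fin m) ℝ) : ℝ :=
  Real.sqrt ((m : ℝ)⁻¹ * ∫ x, (∑ j, (∑ k, x k * S k j) ^ 2) ∂Pix)

/-- P_Γ^⊥(S) = (I − P₁) S (I − P₂). -/
def Pperp {p m : ℕ} (P₁ : Matrix (Fin p) (Fin p) ℝ) (P₂ : Matrix (Fin m) (Fin m) ℝ)
    (S : Matrix (Fin p) (Fin m) ℝ) : Matrix (Fin p) (Fin m) ℝ :=
  (1 - P₁) * S * (1 - P₂)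

/-- P_Γ(S) = S − (I − P₁) S (I − P₂). -/
def Pproj {p m : ℕ} (P₁ : Matrix (Fin p) (Fin p) ℝ) (P₂ : Matrix (Fin m) (Fin m) ℝ)
    (S : Matrix (Fin p) (Fin m) ℝ) : Matrix (Fin p) (Fin m) ℝ :=
  S - Pperp P₁ P₂ S

/-- The cone K(Γ; c₀) = {S : ‖P_Γ^⊥(S)‖_* ≤ c₀‖P_Γ(S)‖_*}. -/
def coneK {p m : ℕ} (P₁ : Matrix (Fin p) (Fin p) ℝ) (P₂ : Matrix (Fin m) (Fin m) ℝ)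
    (c₀ : ℝ) : Set (Matrix (Fin p) (Fin m) ℝ) :=
  {S | nucNorm (Pperp P₁ P₂ S) ≤ c₀ * nucNorm (Pproj P₁ P₂ S)}

/-- The population loss Q_τ(S) = m⁻¹ Σⱼ E[ρ_τ(Yⱼ − XᵀS_{*j})], written through the
distribution Π of X and the conditional densities f j x of Yⱼ given X = x. -/
def Qpop {p m : ℕ} (τ : ℝ) (Pix : Measure (Fin p → ℝ))
    (f : Fin m → (Fin p → ℝ) → ℝ → ℝ) (S : Matrix (Fin p) (Fin m) ℝ) : ℝ :=
  (m : ℝ)⁻¹ * ∑ j, ∫ x, (∫ y, checkFn τ (y - ∑ k, x k * S k j) * f j x y) ∂Pix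
lemma abs_le_checkFn (τ u : ℝ) (hτ0 : 0 < τ) (hτ1 : τ < 1) :
    min τ (1-τ) * |u| ≤ checkFn τ u := by
  unfold checkFn
  rcases le_or_gt u 0 with h | h
  · rw [if_pos h, abs_of_nonpos h]
    have h2 : min τ (1-τ) ≤ 1 - τ := min_le_right _ _
    nlinarith
  · rw [if_neg h.not_ge, abs_of_pos h]
    have h2 : min τ (1-τ) ≤ τ := min_le_left _ _
    nlinarith

lemma poly_int (A B d : ℝ) :
    ∫ t in (0:ℝ)..d, (d - t) * (A + B * t) = A / 2 * d ^ 2 + B / 6 * d ^ 3 := by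
  have h : ∀ t : ℝ, HasDerivAt (fun t => A*d*t - A/2*t^2 + B*d/2*t^2 - B/3*t^3)
      ((d - t) * (A + B * t)) t := by
    intro t
    have h1 := (hasDerivAt_id t).const_mul (A*d)
    have h2 := (hasDerivAt_pow 2 t).const_mul (A/2)
    have h3 := (hasDerivAt_pow 2 t).const_mul (B*d/2)
    have h4 := (hasDerivAt_pow 3 t).const_mul (B/3)
    convert ((h1.sub h2).add h3).sub h4 using 1
    · rfl
    · rfl
    · rfl
    push_cast; norm_num; ring
  rw [intervalIntegral.integral_eq_sub_of_hasDerivAt (fun t _ => h t)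
    ((Continuous.mul (by continuity) (by continuity)).intervalIntegrable 0 d)]
  ring

lemma poly_int' (A B d : ℝ) :
    ∫ t in (0:ℝ)..d, (d - t) * (A - B * t) = A / 2 * d ^ 2 - B / 6 * d ^ 3 := by
  have h := poly_int A (-B) d
  have e : ∀ t : ℝ, (d - t) * (A + (-B) * t) = (d - t) * (A - B * t) := fun t => by ring
  simp only [e] at h
  rw [h]; ring

lemma key_onedim (τ fbar' funder q d : ℝ) (hτ0 : 0 < τ) (hτ1 : τ < 1)
    (f f' : ℝ → ℝ) (hfnn : ∀ y, 0 ≤ f y)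
    (hfone : ∫ y, f y = 1) (hfd : ∀ y, HasDerivAt f (f' y) y)
    (hfb : ∀ y, |f' y| ≤ fbar') (hfl : funder ≤ f q)
    (hq : ∫ y in Set.Iic q, f y = τ)
    (hint : ∀ c, Integrable (fun y => checkFn τ (y - c) * f y)) :
    (∫ y, checkFn τ (y - (q + d)) * f y) - (∫ y, checkFn τ (y - q) * f y)
      ≥ funder / 2 * d ^ 2 - fbar' / 6 * |d| ^ 3 := by
  have hfc : Continuous f := by
    rw [continuous_iff_continuousAt]; exact fun y => (hfd y).continuousAt
  have hfi : Integrable f := by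
    by_contra h
    rw [integral_undef h] at hfone; norm_num at hfone
  set κ := min τ (1-τ) with hκdef
  have hκpos : 0 < κ := lt_min hτ0 (by linarith)
  have hlin : ∀ c, Integrable (fun y => (y - c) * f y) := by
    intro c
    refine ((hint c).const_mul κ⁻¹).mono
      (((continuous_id.sub continuous_const).mul hfc).aestronglyMeasurable)
      (ae_of_all _ fun y => ?_)
    have hab := abs_le_checkFn τ (y - c) hτ0 hτ1
    have h1 : 0 ≤ checkFn τ (y - c) :=
      le_trans (mul_nonneg hκpos.le (abs_nonneg _)) hab
    rw [Real.norm_eq_abs, Real.norm_eq_abs, abs_mul, abs_of_nonneg (hfnn y),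
      abs_of_nonneg (mul_nonneg (inv_nonneg.mpr hκpos.le) (mul_nonneg h1 (hfnn y)))]
    have h2 : κ * |y - c| * f y ≤ checkFn τ (y - c) * f y :=
      mul_le_mul_of_nonneg_right hab (hfnn y)
    rw [show |y - c| * f y = κ⁻¹ * (κ * |y - c| * f y) by field_simp]
    exact mul_le_mul_of_nonneg_left h2 (inv_nonneg.mpr hκpos.le)
  have hdecomp : ∀ c, (∫ y, checkFn τ (y - c) * f y)
      = τ * (∫ y, (y - c) * f y) - ∫ y in Set.Iic c, (y - c) * f y := by
    intro c
    have h1 : (fun y => checkFn τ (y - c) * f y)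
        = fun y => τ * ((y - c) * f y)
            - Set.indicator (Set.Iic c) (fun y => (y - c) * f y) y := by
      funext y
      rw [Set.indicator_apply]
      by_cases h : y ≤ c
      · simp only [checkFn, if_pos (sub_nonpos.mpr h), Set.mem_Iic, if_pos h]; ring
      · simp only [checkFn, if_neg (fun hh => h (sub_nonpos.mp hh)), Set.mem_Iic, if_neg h]; ring
    rw [h1, integral_sub ((hlin c).const_mul τ) ((hlin c).indicator measurableSet_Iic),
      integral_const_mul, integral_indicator measurableSet_Iic]
  have hii1 : IntervalIntegrable f volume q (q+d) := hfc.intervalIntegrable _ _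
  have hii2 : IntervalIntegrable (fun y => (y - q) * f y) volume q (q+d) :=
    ((continuous_id.sub continuous_const).mul hfc).intervalIntegrable _ _
  have hii3 : IntervalIntegrable (fun y => d * f y) volume q (q+d) :=
    (continuous_const.mul hfc).intervalIntegrable _ _
  have e1 : (∫ y, (y - (q + d)) * f y) = (∫ y, (y - q) * f y) - d := by
    rw [show (fun y => (y - (q+d)) * f y) = fun y => (y - q) * f y - d * f y from
      funext fun y => by ring,
      integral_sub (hlin q) (hfi.const_mul d), integral_const_mul, hfone, mul_one]
  have e2 : (∫ y in Set.Iic (q+d), (y - (q+d)) * f y)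
      = (∫ y in Set.Iic (q+d), (y - q) * f y) - d * (∫ y in Set.Iic (q+d), f y) := by
    rw [show (fun y => (y - (q+d)) * f y) = fun y => (y - q) * f y - d * f y from
      funext fun y => by ring,
      integral_sub ((hlin q).integrableOn) ((hfi.const_mul d).integrableOn),
      integral_const_mul]
  have e3 : (∫ y in Set.Iic (q+d), (y - q) * f y) - (∫ y in Set.Iic q, (y - q) * f y)
      = ∫ y in q..(q+d), (y - q) * f y :=
    intervalIntegral.integral_Iic_sub_Iic ((hlin q).integrableOn) ((hlin q).integrableOn)
  have e4 : (∫ y in Set.Iic (q+d), f y) = τ + ∫ y in q..(q+d), f y := by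
    have h := intervalIntegral.integral_Iic_sub_Iic (hfi.integrableOn (s := Set.Iic q))
      (hfi.integrableOn (s := Set.Iic (q+d)))
    rw [hq] at h; linarith
  have e5 : d * (∫ y in q..(q+d), f y) - (∫ y in q..(q+d), (y - q) * f y)
      = ∫ y in q..(q+d), (d - (y - q)) * f y := by
    rw [← intervalIntegral.integral_const_mul, ← intervalIntegral.integral_sub hii3 hii2]
    exact intervalIntegral.integral_congr fun y _ => by ring
  have hkey : (∫ y, checkFn τ (y - (q + d)) * f y) - (∫ y, checkFn τ (y - q) * f y)
      = ∫ y in q..(q+d), (d - (y - q)) * f y := by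
    rw [hdecomp, hdecomp, e1, e2, e4]
    linear_combination e5 - e3
  rw [hkey]
  have hflow : ∀ y, funder - fbar' * |y - q| ≤ f y := by
    intro y
    have h1 : ‖f y - f q‖ ≤ fbar' * ‖y - q‖ :=
      convex_univ.norm_image_sub_le_of_norm_hasDerivWithin_le
        (fun x _ => (hfd x).hasDerivWithinAt)
        (fun x _ => by simpa using hfb x) (Set.mem_univ q) (Set.mem_univ y)
    rw [Real.norm_eq_abs, Real.norm_eq_abs] at h1
    have h2 := (abs_le.mp h1).1
    linarith
  have hcontlow : Continuous fun y : ℝ => (d - (y - q)) * (funder - fbar' * (y - q)) :=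
    (continuous_const.sub (continuous_id.sub continuous_const)).mul
      (continuous_const.sub (continuous_const.mul (continuous_id.sub continuous_const)))
  have hcontlow2 : Continuous fun y : ℝ => (d - (y - q)) * (funder + fbar' * (y - q)) :=
    (continuous_const.sub (continuous_id.sub continuous_const)).mul
      (continuous_const.add (continuous_const.mul (continuous_id.sub continuous_const)))
  have hcontup : Continuous fun y : ℝ => (d - (y - q)) * f y :=
    (continuous_const.sub (continuous_id.sub continuous_const)).mul hfc
  rcases le_or_gt 0 d with hd | hd
  · have hmono : (∫ y in q..(q+d), (d - (y - q)) * (funder - fbar' * (y - q)))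
        ≤ ∫ y in q..(q+d), (d - (y - q)) * f y := by
      refine intervalIntegral.integral_mono_on (by linarith)
        (hcontlow.intervalIntegrable _ _) (hcontup.intervalIntegrable _ _) (fun y hy => ?_)
      obtain ⟨hy1, hy2⟩ := hy
      have habs : |y - q| = y - q := abs_of_nonneg (by linarith)
      have hnn : 0 ≤ d - (y - q) := by linarith
      have hfy : funder - fbar' * (y - q) ≤ f y := by
        have := hflow y; rw [habs] at this; linarith
      exact mul_le_mul_of_nonneg_left hfy hnn
    have hcomp : (∫ y in q..(q+d), (d - (y - q)) * (funder - fbar' * (y - q)))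
        = funder / 2 * d ^ 2 - fbar' / 6 * d ^ 3 := by
      have hsub := intervalIntegral.integral_comp_sub_right
        (fun t => (d - t) * (funder - fbar' * t)) q (a := q) (b := q + d)
      simp only [add_sub_cancel_left, sub_self] at hsub
      rw [hsub, poly_int']
    rw [hcomp] at hmono
    rw [abs_of_nonneg hd]
    linarith
  · have hsymm : (∫ y in q..(q+d), (d - (y - q)) * f y)
        = -∫ y in (q+d)..q, (d - (y - q)) * f y := by
      rw [intervalIntegral.integral_symm]
    have hmono : (∫ y in (q+d)..q, (d - (y - q)) * f y)
        ≤ ∫ y in (q+d)..q, (d - (y - q)) * (funder + fbar' * (y - q)) := by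
      refine intervalIntegral.integral_mono_on (by linarith)
        (hcontup.intervalIntegrable _ _) (hcontlow2.intervalIntegrable _ _) (fun y hy => ?_)
      obtain ⟨hy1, hy2⟩ := hy
      have habs : |y - q| = -(y - q) := abs_of_nonpos (by linarith)
      have hnp : d - (y - q) ≤ 0 := by linarith
      have hfy : funder + fbar' * (y - q) ≤ f y := by
        have := hflow y; rw [habs] at this; linarith
      exact mul_le_mul_of_nonpos_left hfy hnp
    have hcomp : (∫ y in (q+d)..q, (d - (y - q)) * (funder + fbar' * (y - q)))
        = -(funder / 2 * d ^ 2 + fbar' / 6 * d ^ 3) := by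
      rw [intervalIntegral.integral_symm]
      have hsub := intervalIntegral.integral_comp_sub_right
        (fun t => (d - t) * (funder + fbar' * t)) q (a := q) (b := q + d)
      simp only [add_sub_cancel_left, sub_self] at hsub
      rw [hsub, poly_int]
    rw [hcomp] at hmono
    rw [hsymm, abs_of_neg hd, show (-d)^3 = -(d^3) from by ring]
    linarith
/-- restricted-nonlinearity minorization of the population loss: if
Δ ∈ K(Γ;3) and ‖Δ‖_{L2(Π)} ≤ 4ν, then Q_τ(Γ+Δ) − Q_τ(Γ) ≥ (1/4)f̲‖Δ‖²_{L2(Π)}. -/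
theorem population_loss_minorization {p m : ℕ} (hm : 0 < m)
    (τ : ℝ) (hτ : τ ∈ Set.Ioo (0 : ℝ) 1)
    (Pix : Measure (Fin p → ℝ)) [IsProbabilityMeasure Pix]
    (Γ : Matrix (Fin p) (Fin m) ℝ)
    -- conditional densities f j x of Y_j given X = x, with derivative f' j x
    (f f' : Fin m → (Fin p → ℝ) → ℝ → ℝ)
    (hfmeas : ∀ j x, Measurable (f j x))
    (hfnn : ∀ j x y, 0 ≤ f j x y)
    (hfone : ∀ j x, ∫ y, f j x y = 1)
    (hfderiv : ∀ j x y, HasDerivAt (f j x) (f' j x y) y)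
    (fbar' funder : ℝ) (hfbar : 0 < fbar') (hfunder : 0 < funder)
    (hfb : ∀ j x y, |f' j x y| ≤ fbar')
    (hfl : ∀ j x, funder ≤ f j x (∑ k, x k * Γ k j))
    -- xᵀΓ_{*j} is the conditional τ-quantile of Y_j given X = x
    (hquant : ∀ j x, ∫ y in Set.Iic (∑ k, x k * Γ k j), f j x y = τ)
    -- projections onto the column spaces of Γ and Γᵀ
    (P₁ : Matrix (Fin p) (Fin p) ℝ) (P₂ : Matrix (Fin m) (Fin m) ℝ)
    (hP₁sym : P₁ᵀ = P₁) (hP₁idem : P₁ * P₁ = P₁)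
    (hP₁range : ∀ v : Fin p → ℝ, P₁.mulVec v = v ↔ v ∈ Set.range Γ.mulVec)
    (hP₂sym : P₂ᵀ = P₂) (hP₂idem : P₂ * P₂ = P₂)
    (hP₂range : ∀ v : Fin m → ℝ, P₂.mulVec v = v ↔ v ∈ Set.range Γᵀ.mulVec)
    -- integrability of the quantities appearing in the statement
    (hint1 : ∀ (S : Matrix (Fin p) (Fin m) ℝ) (j : Fin m),
      Integrable (fun x => ∫ y, checkFn τ (y - ∑ k, x k * S k j) * f j x y) Pix)
    (hint2 : ∀ (j : Fin m) (x : Fin p → ℝ) (c : ℝ),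
      Integrable (fun y => checkFn τ (y - c) * f j x y))
    (hint3 : ∀ (Δ : Matrix (Fin p) (Fin m) ℝ) (j : Fin m),
      Integrable (fun x => |∑ k, x k * Δ k j| ^ 3) Pix)
    (hint4 : ∀ S : Matrix (Fin p) (Fin m) ℝ,
      Integrable (fun x => ∑ j, (∑ k, x k * S k j) ^ 2) Pix)
    -- the restricted nonlinearity constant
    (ν : ℝ)
    (hν : ν = (3 / 8) * (funder / fbar') * sInf
        ((fun Δ => (L2Pi Pix Δ) ^ 3
            / ((m : ℝ)⁻¹ * ∑ j, ∫ x, |∑ k, x k * Δ k j| ^ 3 ∂Pix)) ''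
          {Δ : Matrix (Fin p) (Fin m) ℝ | Δ ∈ coneK P₁ P₂ 3 ∧ Δ ≠ 0}))
    (hνpos : 0 < ν) :
    ∀ Δ ∈ coneK P₁ P₂ 3, L2Pi Pix Δ ≤ 4 * ν →
      Qpop τ Pix f (Γ + Δ) - Qpop τ Pix f Γ ≥ (1 / 4) * funder * (L2Pi Pix Δ) ^ 2 := by
  intro Δ hΔcone hΔle
  by_cases hΔ0 : Δ = 0
  · subst hΔ0
    simp only [add_zero, sub_self, ge_iff_le]
    have hL0 : L2Pi Pix (0 : Matrix (Fin p) (Fin m) ℝ) = 0 := by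
      unfold L2Pi
      simp
    rw [hL0]
    norm_num
  -- notation
  set L := L2Pi Pix Δ with hLdef
  have hLnn : (0:ℝ) ≤ L := Real.sqrt_nonneg _
  have hcd : ∀ j : Fin m, Continuous (fun x : Fin p → ℝ => ∑ k, x k * Δ k j) :=
    fun j => continuous_finset_sum _ fun k _ => (continuous_apply k).mul continuous_const
  have hintd2 : ∀ j : Fin m, Integrable (fun x => (∑ k, x k * Δ k j)^2) Pix := by
    intro j
    refine (hint4 Δ).mono ((hcd j).pow 2).aestronglyMeasurable (ae_of_all _ fun x => ?_)
    rw [Real.norm_eq_abs, abs_of_nonneg (sq_nonneg _), Real.norm_eq_abs,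
      abs_of_nonneg (Finset.sum_nonneg fun i _ => sq_nonneg _)]
    exact Finset.single_le_sum (fun i _ => sq_nonneg ((∑ k, x k * Δ k i))) (Finset.mem_univ j)
  have hminv : (0:ℝ) ≤ (m:ℝ)⁻¹ := by positivity
  have hLsq : L^2 = (m:ℝ)⁻¹ * ∑ j, ∫ x, (∑ k, x k * Δ k j)^2 ∂Pix := by
    rw [hLdef]
    unfold L2Pi
    rw [← integral_finset_sum _ (fun j _ => hintd2 j)]
    exact Real.sq_sqrt (mul_nonneg hminv (integral_nonneg fun x =>
      Finset.sum_nonneg fun j _ => sq_nonneg _))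
  -- per-coordinate bound
  have hj : ∀ j : Fin m,
      funder/2 * (∫ x, (∑ k, x k * Δ k j)^2 ∂Pix) - fbar'/6 * (∫ x, |∑ k, x k * Δ k j|^3 ∂Pix)
      ≤ (∫ x, (∫ y, checkFn τ (y - (∑ k, x k * Γ k j + ∑ k, x k * Δ k j)) * f j x y) ∂Pix)
        - (∫ x, (∫ y, checkFn τ (y - ∑ k, x k * Γ k j) * f j x y) ∂Pix) := by
    intro j
    have hi1 : Integrable
        (fun x => ∫ y, checkFn τ (y - (∑ k, x k * Γ k j + ∑ k, x k * Δ k j)) * f j x y) Pix := by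
      have h := hint1 (Γ + Δ) j
      simpa [Matrix.add_apply, mul_add, Finset.sum_add_distrib] using h
    have hi2 := hint1 Γ j
    have hlow : Integrable
        (fun x => funder/2 * (∑ k, x k * Δ k j)^2 - fbar'/6 * |∑ k, x k * Δ k j|^3) Pix :=
      ((hintd2 j).const_mul _).sub ((hint3 Δ j).const_mul _)
    have hpt : ∀ x : Fin p → ℝ,
        funder/2 * (∑ k, x k * Δ k j)^2 - fbar'/6 * |∑ k, x k * Δ k j|^3
        ≤ (∫ y, checkFn τ (y - (∑ k, x k * Γ k j + ∑ k, x k * Δ k j)) * f j x y)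
          - (∫ y, checkFn τ (y - ∑ k, x k * Γ k j) * f j x y) := by
      intro x
      exact key_onedim τ fbar' funder (∑ k, x k * Γ k j) (∑ k, x k * Δ k j) hτ.1 hτ.2
        (f j x) (f' j x) (hfnn j x) (hfone j x) (hfderiv j x) (hfb j x) (hfl j x)
        (hquant j x) (hint2 j x)
    have h1 : (∫ x, (funder/2 * (∑ k, x k * Δ k j)^2 - fbar'/6 * |∑ k, x k * Δ k j|^3) ∂Pix)
        ≤ ∫ x, ((∫ y, checkFn τ (y - (∑ k, x k * Γ k j + ∑ k, x k * Δ k j)) * f j x y)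
            - (∫ y, checkFn τ (y - ∑ k, x k * Γ k j) * f j x y)) ∂Pix :=
      integral_mono hlow (hi1.sub hi2) hpt
    rw [integral_sub hi1 hi2,
      integral_sub ((hintd2 j).const_mul _) ((hint3 Δ j).const_mul _),
      integral_const_mul, integral_const_mul] at h1
    exact h1
  -- assemble the loss difference
  have hQ : Qpop τ Pix f (Γ + Δ) - Qpop τ Pix f Γ
      = (m:ℝ)⁻¹ * ∑ j,
        ((∫ x, (∫ y, checkFn τ (y - (∑ k, x k * Γ k j + ∑ k, x k * Δ k j)) * f j x y) ∂Pix)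
          - (∫ x, (∫ y, checkFn τ (y - ∑ k, x k * Γ k j) * f j x y) ∂Pix)) := by
    simp only [Qpop, Matrix.add_apply, mul_add, Finset.sum_add_distrib]
    rw [Finset.sum_sub_distrib]
    ring
  set M := (m:ℝ)⁻¹ * ∑ j, ∫ x, |∑ k, x k * Δ k j|^3 ∂Pix with hMdef
  have hQge : Qpop τ Pix f (Γ + Δ) - Qpop τ Pix f Γ ≥ funder/2 * L^2 - fbar'/6 * M := by
    rw [hQ]
    have hs : ∑ j, (funder/2 * (∫ x, (∑ k, x k * Δ k j)^2 ∂Pix)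
          - fbar'/6 * (∫ x, |∑ k, x k * Δ k j|^3 ∂Pix))
        ≤ ∑ j,
          ((∫ x, (∫ y, checkFn τ (y - (∑ k, x k * Γ k j + ∑ k, x k * Δ k j)) * f j x y) ∂Pix)
            - (∫ x, (∫ y, checkFn τ (y - ∑ k, x k * Γ k j) * f j x y) ∂Pix)) :=
      Finset.sum_le_sum fun j _ => hj j
    have heq : (m:ℝ)⁻¹ * ∑ j, (funder/2 * (∫ x, (∑ k, x k * Δ k j)^2 ∂Pix)
          - fbar'/6 * (∫ x, |∑ k, x k * Δ k j|^3 ∂Pix))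
        = funder/2 * L^2 - fbar'/6 * M := by
      rw [Finset.sum_sub_distrib, ← Finset.mul_sum, ← Finset.mul_sum, hLsq, hMdef]
      ring
    have := mul_le_mul_of_nonneg_left hs hminv
    linarith
  -- the ν inequality
  have hM0 : (0:ℝ) ≤ M := by
    refine mul_nonneg hminv (Finset.sum_nonneg fun j _ => integral_nonneg fun x => ?_)
    positivity
  have hbdd : BddBelow ((fun Δ => (L2Pi Pix Δ) ^ 3
      / ((m : ℝ)⁻¹ * ∑ j, ∫ x, |∑ k, x k * Δ k j| ^ 3 ∂Pix)) ''
      {Δ : Matrix (Fin p) (Fin m) ℝ | Δ ∈ coneK P₁ P₂ 3 ∧ Δ ≠ 0}) := by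
    refine ⟨0, fun r hr => ?_⟩
    obtain ⟨Δ', hΔ', rfl⟩ := hr
    have h1 : (0:ℝ) ≤ L2Pi Pix Δ' := Real.sqrt_nonneg _
    have h2 : (0:ℝ) ≤ (m : ℝ)⁻¹ * ∑ j, ∫ x, |∑ k, x k * Δ' k j| ^ 3 ∂Pix := by
      refine mul_nonneg hminv (Finset.sum_nonneg fun j _ => integral_nonneg fun x => ?_)
      positivity
    exact div_nonneg (pow_nonneg h1 3) h2
  have hmem : L ^ 3 / M ∈ ((fun Δ => (L2Pi Pix Δ) ^ 3
      / ((m : ℝ)⁻¹ * ∑ j, ∫ x, |∑ k, x k * Δ k j| ^ 3 ∂Pix)) ''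
      {Δ : Matrix (Fin p) (Fin m) ℝ | Δ ∈ coneK P₁ P₂ 3 ∧ Δ ≠ 0}) :=
    ⟨Δ, ⟨hΔcone, hΔ0⟩, rfl⟩
  have hsInf := csInf_le hbdd hmem
  have hc : (0:ℝ) < (3/8) * (funder/fbar') := by positivity
  have hν' : ν ≤ (3/8) * (funder/fbar') * (L ^ 3 / M) := by
    rw [hν]
    exact mul_le_mul_of_nonneg_left hsInf hc.le
  have hRpos : (0:ℝ) < L ^ 3 / M := by
    rcases le_or_gt (L ^ 3 / M) 0 with h | h
    · nlinarith
    · exact h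
  have hMpos : (0:ℝ) < M := by
    rcases eq_or_lt_of_le hM0 with h | h
    · rw [← h, div_zero] at hRpos
      exact absurd hRpos (lt_irrefl 0)
    · exact h
  have hνM : ν * M ≤ (3/8) * (funder/fbar') * L ^ 3 := by
    have h := mul_le_mul_of_nonneg_right hν' hM0
    have he : (3/8) * (funder/fbar') * (L ^ 3 / M) * M = (3/8) * (funder/fbar') * L ^ 3 := by
      field_simp
    linarith
  have hcube : L ^ 3 ≤ 4 * ν * L ^ 2 := by
    nlinarith [mul_nonneg (sub_nonneg.mpr hΔle) (sq_nonneg L)]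
  have h3 : ν * M ≤ ν * ((3/2) * (funder/fbar') * L ^ 2) := by
    have h4 := mul_le_mul_of_nonneg_left hcube hc.le
    have h5 : (3/8) * (funder/fbar') * (4 * ν * L ^ 2) = ν * ((3/2) * (funder/fbar') * L ^ 2) := by
      ring
    linarith
  have h4 : M ≤ (3/2) * (funder/fbar') * L ^ 2 := le_of_mul_le_mul_left h3 hνpos
  have h5 : fbar'/6 * M ≤ funder/4 * L ^ 2 := by
    have h6 := mul_le_mul_of_nonneg_left h4 (show (0:ℝ) ≤ fbar'/6 by positivity)
    have h7 : fbar'/6 * ((3/2) * (funder/fbar') * L ^ 2) = funder/4 * L ^ 2 := by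
      field_simp
      ring
    linarith
  have hfinal : (1/4) * funder * L ^ 2 ≤ funder/2 * L^2 - fbar'/6 * M := by linarith
  linarith [hQge]
end
end

section
/- Let Z be an integrable real random variable with cumulative distribution function F, let τ ∈ (0,1), and let a ∈ ℝ satisfy F(a) = τ (a is a τ-quantile) and P(Z = z) = 0 for all z (F continuous). Then for every v ∈ ℝ, E[ρ_τ(Z − a − v)] − E[ρ_τ(Z − a)] = ∫_0^v (F(a + z) − F(a)) dz. -/
open MeasureTheory

noncomputable section

lemma check_identity (τ u v : ℝ) :
    checkFn τ (u - v) - checkFn τ u = -(v * τ) + (max (v - u) 0 - max (-u) 0) := by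
  unfold checkFn
  rcases le_or_gt (u - v) 0 with h | h <;> rcases le_or_gt u 0 with h2 | h2
  · rw [if_pos h, if_pos h2, max_eq_left (by linarith : (0:ℝ) ≤ v - u),
      max_eq_left (by linarith : (0:ℝ) ≤ -u)]; ring
  · rw [if_pos h, if_neg (not_le.mpr h2), max_eq_left (by linarith : (0:ℝ) ≤ v - u),
      max_eq_right (by linarith : -u ≤ (0:ℝ))]; ring
  · rw [if_neg (by intro hh; linarith : ¬ u - v ≤ 0), if_pos h2,
      max_eq_right (by linarith : v - u ≤ (0:ℝ)), max_eq_left (by linarith : (0:ℝ) ≤ -u)]; ring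
  · rw [if_neg (by intro hh; linarith : ¬ u - v ≤ 0), if_neg (not_le.mpr h2),
      max_eq_right (by linarith : v - u ≤ (0:ℝ)), max_eq_right (by linarith : -u ≤ (0:ℝ))]; ring

lemma maxdiff_eq (u v : ℝ) (hv : 0 ≤ v) :
    max (v - u) 0 - max (-u) 0 = max (v - max u 0) 0 := by
  rcases le_total u 0 with h | h
  · rw [max_eq_right h, sub_zero, max_eq_left (by linarith : (0:ℝ) ≤ -u),
      max_eq_left (by linarith : (0:ℝ) ≤ v - u), max_eq_left hv]; ring
  · rw [max_eq_right (by linarith : -u ≤ (0:ℝ)), max_eq_left h, sub_zero]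

lemma abs_maxdiff_le (u v : ℝ) : |max (v - u) 0 - max (-u) 0| ≤ |v| := by
  rw [abs_le]
  constructor <;> rcases le_total (v - u) 0 with h | h <;> rcases le_total (-u) 0 with h2 | h2 <;>
    simp [max_eq_left, max_eq_right, h, h2] <;>
    linarith [le_abs_self v, neg_abs_le v]

lemma abs_check_le (τ u : ℝ) (hτ : τ ∈ Set.Ioo (0:ℝ) 1) : |checkFn τ u| ≤ |u| := by
  unfold checkFn
  rw [abs_mul]
  have : |τ - if u ≤ 0 then 1 else 0| ≤ 1 := by
    split_ifs <;> rw [abs_le] <;> constructor <;> linarith [hτ.1, hτ.2]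
  calc |u| * |τ - if u ≤ 0 then 1 else 0| ≤ |u| * 1 :=
        mul_le_mul_of_nonneg_left this (abs_nonneg u)
    _ = |u| := mul_one _

lemma key_nonneg {Ω : Type*} [MeasurableSpace Ω] (μ : Measure Ω) [IsProbabilityMeasure μ]
    (Z : Ω → ℝ) (hZ : Measurable Z) (a v : ℝ) (hv : 0 ≤ v) :
    ∫ ω, (max (v - (Z ω - a)) 0 - max (-(Z ω - a)) 0) ∂μ
      = ∫ z in (0:ℝ)..v, (μ {ω | Z ω ≤ a + z}).toReal := by
  set ν := volume.restrict (Set.Ioc (0:ℝ) v) with hν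
  set S : Set (Ω × ℝ) := {p | Z p.1 ≤ a + p.2} with hSdef
  have hS : MeasurableSet S :=
    measurableSet_le (hZ.comp measurable_fst) (measurable_const.add measurable_snd)
  -- left side
  have hmeas1 : Measurable fun ω => max (v - max (Z ω - a) 0) 0 :=
    ((measurable_const.sub ((hZ.sub measurable_const).max measurable_const)).max measurable_const)
  have hfun : (fun ω => max (v - (Z ω - a)) 0 - max (-(Z ω - a)) 0)
      = fun ω => max (v - max (Z ω - a) 0) 0 := by
    funext ω; exact maxdiff_eq (Z ω - a) v hv
  have h1 : (μ.prod ν) S = ∫⁻ ω, ENNReal.ofReal (max (v - max (Z ω - a) 0) 0) ∂μ := by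
    rw [Measure.prod_apply hS]
    refine lintegral_congr fun ω => ?_
    have hpre : Prod.mk ω ⁻¹' S = Set.Ici (Z ω - a) := by
      ext z
      simp only [hSdef, Set.mem_preimage, Set.mem_setOf_eq, Set.mem_Ici]
      constructor <;> intro hh <;> linarith
    rw [hpre, hν, Measure.restrict_apply measurableSet_Ici]
    rcases le_or_gt (Z ω - a) 0 with h | h
    · have : Set.Ici (Z ω - a) ∩ Set.Ioc 0 v = Set.Ioc 0 v :=
        Set.inter_eq_right.mpr fun z hz => le_trans h hz.1.le
      rw [this, Real.volume_Ioc, max_eq_right h, sub_zero, max_eq_left hv]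
    · have : Set.Ici (Z ω - a) ∩ Set.Ioc 0 v = Set.Icc (Z ω - a) v := by
        ext z
        simp only [Set.mem_inter_iff, Set.mem_Ici, Set.mem_Ioc, Set.mem_Icc]
        exact ⟨fun ⟨h1, _, h3⟩ => ⟨h1, h3⟩, fun ⟨h1, h3⟩ => ⟨h1, lt_of_lt_of_le h h1, h3⟩⟩
      rw [this, Real.volume_Icc, max_eq_left h.le]
      rcases le_total (v - (Z ω - a)) 0 with hh | hh
      · rw [max_eq_right hh, ENNReal.ofReal_eq_zero.mpr hh, ENNReal.ofReal_eq_zero.mpr (by rfl)]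
      · rw [max_eq_left hh]
  have h2 : (μ.prod ν) S = ∫⁻ z in Set.Ioc (0:ℝ) v, μ {ω | Z ω ≤ a + z} := by
    rw [Measure.prod_apply_symm hS]
    rfl
  have hLHS : ∫ ω, max (v - max (Z ω - a) 0) 0 ∂μ = ((μ.prod ν) S).toReal := by
    rw [integral_eq_lintegral_of_nonneg_ae (f := fun ω => max (v - max (Z ω - a) 0) 0)
        (Filter.Eventually.of_forall fun ω => le_max_right _ _)
        hmeas1.aestronglyMeasurable, h1]
  have hmeasR : Measurable fun z => μ {ω | Z ω ≤ a + z} :=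
    measurable_measure_prodMk_right (μ := μ) hS
  have hRHS : ∫ z in Set.Ioc (0:ℝ) v, (μ {ω | Z ω ≤ a + z}).toReal = ((μ.prod ν) S).toReal := by
    rw [h2, integral_toReal (hmeasR.aemeasurable.restrict)
      (Filter.Eventually.of_forall fun z => measure_lt_top μ _)]
  rw [hfun, hLHS, intervalIntegral.integral_of_le hv, hRHS]

lemma key_all {Ω : Type*} [MeasurableSpace Ω] (μ : Measure Ω) [IsProbabilityMeasure μ]
    (Z : Ω → ℝ) (hZ : Measurable Z) (a v : ℝ) :
    ∫ ω, (max (v - (Z ω - a)) 0 - max (-(Z ω - a)) 0) ∂μ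
      = ∫ z in (0:ℝ)..v, (μ {ω | Z ω ≤ a + z}).toReal := by
  rcases le_or_gt 0 v with hv | hv
  · exact key_nonneg μ Z hZ a v hv
  · have base := key_nonneg μ Z hZ (a + v) (-v) (by linarith)
    have hfun : (fun ω => max (-v - (Z ω - (a + v))) 0 - max (-(Z ω - (a + v))) 0)
        = fun ω => -(max (v - (Z ω - a)) 0 - max (-(Z ω - a)) 0) := by
      funext ω
      have e1 : -v - (Z ω - (a + v)) = -(Z ω - a) := by ring
      have e2 : -(Z ω - (a + v)) = v - (Z ω - a) := by ring
      rw [e1, e2]; ring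
    rw [hfun, integral_neg] at base
    have hsub : ∫ z in (0:ℝ)..(-v), (μ {ω | Z ω ≤ (a + v) + z}).toReal
        = ∫ z in v..(0:ℝ), (μ {ω | Z ω ≤ a + z}).toReal := by
      have := intervalIntegral.integral_comp_add_right (a := (0:ℝ)) (b := -v)
        (f := fun z => (μ {ω | Z ω ≤ a + z}).toReal) (d := v)
      rw [zero_add, neg_add_cancel] at this
      rw [← this]
      refine intervalIntegral.integral_congr fun z _ => ?_
      have : (a + v) + z = a + (z + v) := by ring
      rw [this]
    rw [hsub] at base
    have h3 : ∫ ω, (max (v - (Z ω - a)) 0 - max (-(Z ω - a)) 0) ∂μ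
        = -∫ z in v..(0:ℝ), (μ {ω | Z ω ≤ a + z}).toReal := by
      rw [← base]; ring
    rw [h3, intervalIntegral.integral_symm v 0]

/-- if Z is an integrable real random variable with continuous cdf F and
F(a) = τ, then E[ρ_τ(Z − a − v)] − E[ρ_τ(Z − a)] = ∫₀^v (F(a+z) − F(a)) dz. -/
theorem expected_check_loss_integral_identity
    {Ω : Type*} [MeasurableSpace Ω] (μ : Measure Ω) [IsProbabilityMeasure μ]
    (Z : Ω → ℝ) (hZmeas : Measurable Z) (hZint : Integrable Z μ)
    (τ a : ℝ) (hτ : τ ∈ Set.Ioo (0 : ℝ) 1)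
    (F : ℝ → ℝ) (hF : ∀ z : ℝ, F z = (μ {ω | Z ω ≤ z}).toReal)
    (hquant : F a = τ) (hcont : ∀ z : ℝ, μ {ω | Z ω = z} = 0) :
    ∀ v : ℝ,
      (∫ ω, checkFn τ (Z ω - a - v) ∂μ) - (∫ ω, checkFn τ (Z ω - a) ∂μ)
        = ∫ z in (0 : ℝ)..v, (F (a + z) - F a) := by
  intro v
  have hcheckMeas : Measurable (checkFn τ) := by
    unfold checkFn
    exact measurable_id.mul (measurable_const.sub
      (Measurable.ite (measurableSet_le measurable_id measurable_const)
        measurable_const measurable_const))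
  have hint : ∀ c : ℝ, Integrable (fun ω => checkFn τ (Z ω - c)) μ := by
    intro c
    refine Integrable.mono' ((hZint.sub (integrable_const c)).abs)
      (hcheckMeas.comp (hZmeas.sub measurable_const)).aestronglyMeasurable
      (Filter.Eventually.of_forall fun ω => ?_)
    exact abs_check_le τ (Z ω - c) hτ
  have hint1 : Integrable (fun ω => checkFn τ (Z ω - a - v)) μ := by
    have := hint (a + v)
    simpa [sub_sub] using this
  have hint2 : Integrable (fun ω => checkFn τ (Z ω - a)) μ := hint a
  have hintmax : Integrable (fun ω => max (v - (Z ω - a)) 0 - max (-(Z ω - a)) 0) μ := by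
    refine Integrable.mono' (integrable_const |v|)
      ?_ (Filter.Eventually.of_forall fun ω => ?_)
    · exact (((measurable_const.sub (hZmeas.sub measurable_const)).max measurable_const).sub
        ((hZmeas.sub measurable_const).neg.max measurable_const)).aestronglyMeasurable
    · exact abs_maxdiff_le (Z ω - a) v
  rw [← integral_sub hint1 hint2]
  have hptw : (fun ω => checkFn τ (Z ω - a - v) - checkFn τ (Z ω - a))
      = fun ω => -(v * τ) + (max (v - (Z ω - a)) 0 - max (-(Z ω - a)) 0) := by
    funext ω
    exact check_identity τ (Z ω - a) v
  rw [hptw, integral_add (integrable_const _) hintmax, integral_const, probReal_univ,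
    one_smul, key_all μ Z hZmeas a v]
  -- now handle RHS
  have hmono : Monotone fun z => (μ {ω | Z ω ≤ a + z}).toReal := by
    intro x y hxy
    refine ENNReal.toReal_mono (measure_ne_top μ _) (measure_mono ?_)
    intro ω hω
    simp only [Set.mem_setOf_eq] at hω ⊢
    linarith
  have hii : IntervalIntegrable (fun z => (μ {ω | Z ω ≤ a + z}).toReal) volume 0 v :=
    hmono.intervalIntegrable
  have hRW : (fun z : ℝ => F (a + z) - F a) = fun z => (μ {ω | Z ω ≤ a + z}).toReal - τ := by
    funext z; rw [hF (a + z), hquant]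
  rw [hRW, intervalIntegral.integral_sub hii (intervalIntegrable_const),
    intervalIntegral.integral_const]
  simp only [smul_eq_mul, sub_zero]
  ring
end
end

section
/- Let Γ ∈ ℝ^{p×m} have rank r. Then for every Δ ∈ ℝ^{p×m}, the nuclear norm satisfies ‖Γ‖_* − ‖Γ + Δ‖_* ≤ ‖P_Γ(Δ)‖_* − ‖P_Γ^⊥(Δ)‖_*; in particular, ‖Γ + P_Γ^⊥(Δ)‖_* = ‖Γ‖_* + ‖P_Γ^⊥(Δ)‖_* (decomposability of the nuclear norm along the support of Γ). -/
open Matrix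
open scoped BigOperators

noncomputable section

lemma spectral_pack {p m : ℕ} (A : Matrix (Fin p) (Fin m) ℝ) :
    ∃ U : Matrix (Fin m) (Fin m) ℝ,
      U * Uᵀ = 1 ∧ Uᵀ * U = 1 ∧
      Aᵀ * A = U * diagonal ((Matrix.isHermitian_conjTranspose_mul_self A).eigenvalues) * Uᵀ := by
  set hA := Matrix.isHermitian_conjTranspose_mul_self A
  refine ⟨(hA.eigenvectorUnitary : Matrix (Fin m) (Fin m) ℝ), ?_, ?_, ?_⟩
  · have := (Matrix.mem_unitaryGroup_iff).mp (hA.eigenvectorUnitary).2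
    simpa [Matrix.star_eq_conjTranspose, Matrix.conjTranspose_eq_transpose_of_trivial] using this
  · have := (Matrix.mem_unitaryGroup_iff').mp (hA.eigenvectorUnitary).2
    simpa [Matrix.star_eq_conjTranspose, Matrix.conjTranspose_eq_transpose_of_trivial] using this
  · have h := hA.spectral_theorem
    have h2 : RCLike.ofReal ∘ hA.eigenvalues = hA.eigenvalues := by funext j; simp
    rw [h2] at h
    simpa [Matrix.star_eq_conjTranspose, Matrix.conjTranspose_eq_transpose_of_trivial] using h

lemma dot_aux {a b : ℕ} (M : Matrix (Fin a) (Fin b) ℝ) (v : Fin b → ℝ) (z : Fin a → ℝ) :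
    (M *ᵥ v) ⬝ᵥ z = v ⬝ᵥ (Mᵀ *ᵥ z) := by
  rw [dotProduct_mulVec, vecMul_transpose]

lemma trace_le_nucNorm {p m : ℕ} (A X : Matrix (Fin p) (Fin m) ℝ)
    (hX : ∀ u : Fin m → ℝ, (X *ᵥ u) ⬝ᵥ (X *ᵥ u) ≤ u ⬝ᵥ u) :
    trace (Xᵀ * A) ≤ nucNorm A := by
  obtain ⟨U, hUUt, hUtU, hspec⟩ := spectral_pack A
  set lam := (Matrix.isHermitian_conjTranspose_mul_self A).eigenvalues with hlam
  set u : Fin m → Fin m → ℝ := fun j i => U i j with hu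
  have hcolnorm : ∀ j, (u j) ⬝ᵥ (u j) = 1 := by
    intro j
    have := congrFun (congrFun hUtU j) j
    simpa [Matrix.mul_apply, Matrix.one_apply, dotProduct, hu, Matrix.transpose_apply] using this
  have hAu : ∀ j, (Aᵀ * A) *ᵥ (u j) = lam j • u j := by
    intro j
    have h1 : (Aᵀ * A) * U = U * diagonal lam := by
      rw [hspec, Matrix.mul_assoc (U * diagonal lam), hUtU, mul_one]
    funext i
    have hthis := congrFun (congrFun h1 i) j
    rw [Matrix.mul_diagonal] at hthis
    have e : ((Aᵀ * A) *ᵥ u j) i = ((Aᵀ * A) * U) i j := by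
      simp [Matrix.mulVec, Matrix.mul_apply, dotProduct, hu]
    rw [Pi.smul_apply, e, hthis, hu]
    simp [mul_comm]
  have hAdot : ∀ j, (A *ᵥ u j) ⬝ᵥ (A *ᵥ u j) = lam j := by
    intro j
    rw [dot_aux, mulVec_mulVec, hAu j, dotProduct_smul, hcolnorm j]
    simp
  have key : trace (Xᵀ * A) = ∑ j, (X *ᵥ u j) ⬝ᵥ (A *ᵥ u j) := by
    have h2 : trace (Uᵀ * ((Xᵀ * A) * U)) = trace (Xᵀ * A) := by
      rw [trace_mul_comm, Matrix.mul_assoc, hUUt, Matrix.mul_one]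
    rw [← h2, trace]
    refine Finset.sum_congr rfl fun j _ => ?_
    have h3 : (Uᵀ * ((Xᵀ * A) * U)) j j = (u j) ⬝ᵥ ((Xᵀ * A) *ᵥ (u j)) := by
      simp only [Matrix.mul_apply, Matrix.mulVec, dotProduct, Matrix.transpose_apply,
        Matrix.diag_apply, hu, Finset.mul_sum, Finset.sum_mul]
    rw [Matrix.diag_apply, h3, ← mulVec_mulVec, dotProduct_mulVec, vecMul_transpose]
  rw [key]
  unfold nucNorm
  apply Finset.sum_le_sum
  intro j _
  have cs : (X *ᵥ u j) ⬝ᵥ (A *ᵥ u j) ≤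
      Real.sqrt ((X *ᵥ u j) ⬝ᵥ (X *ᵥ u j)) * Real.sqrt ((A *ᵥ u j) ⬝ᵥ (A *ᵥ u j)) := by
    have := Real.sum_mul_le_sqrt_mul_sqrt Finset.univ (fun i => (X *ᵥ u j) i) (fun i => (A *ᵥ u j) i)
    simpa [dotProduct, sq] using this
  refine cs.trans ?_
  rw [hAdot j]
  have h1 : Real.sqrt ((X *ᵥ u j) ⬝ᵥ (X *ᵥ u j)) ≤ 1 := by
    have := Real.sqrt_le_sqrt ((hX (u j)).trans_eq (hcolnorm j))
    simpa using this
  calc Real.sqrt ((X *ᵥ u j) ⬝ᵥ (X *ᵥ u j)) * Real.sqrt (lam j)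
      ≤ 1 * Real.sqrt (lam j) := by
        exact mul_le_mul_of_nonneg_right h1 (Real.sqrt_nonneg _)
    _ = Real.sqrt (lam j) := one_mul _

lemma exists_dual_achiever {p m : ℕ} (A : Matrix (Fin p) (Fin m) ℝ) :
    ∃ X : Matrix (Fin p) (Fin m) ℝ,
      (∀ u : Fin m → ℝ, (X *ᵥ u) ⬝ᵥ (X *ᵥ u) ≤ u ⬝ᵥ u) ∧
      trace (Xᵀ * A) = nucNorm A ∧
      (∀ Q : Matrix (Fin p) (Fin p) ℝ, Q * A = A → Q * X = X) ∧
      (∀ R : Matrix (Fin m) (Fin m) ℝ, A * R = A → X * R = X) := by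
  obtain ⟨U, hUUt, hUtU, hspec⟩ := spectral_pack A
  set lam := (Matrix.isHermitian_conjTranspose_mul_self A).eigenvalues with hlam
  set g : Fin m → ℝ := fun j => if 0 < lam j then (Real.sqrt (lam j))⁻¹ else 0 with hg
  set X : Matrix (Fin p) (Fin m) ℝ := A * (U * (diagonal g * Uᵀ)) with hXdef
  -- helper: sqrt facts
  have hsq : ∀ j, 0 < lam j → Real.sqrt (lam j) * Real.sqrt (lam j) = lam j :=
    fun j hj => Real.mul_self_sqrt hj.le
  have hsqne : ∀ j, 0 < lam j → Real.sqrt (lam j) ≠ 0 :=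
    fun j hj => ne_of_gt (Real.sqrt_pos.mpr hj)
  -- gram cancellation
  have hgram : ∀ {k : ℕ} (M : Matrix (Fin m) (Fin k) ℝ),
      Aᵀ * (A * (U * M)) = U * (diagonal lam * M) := by
    intro k M
    calc Aᵀ * (A * (U * M)) = (Aᵀ * A) * (U * M) := by rw [Matrix.mul_assoc]
      _ = U * diagonal lam * Uᵀ * (U * M) := by rw [hspec]
      _ = U * (diagonal lam * ((Uᵀ * U) * M)) := by simp only [Matrix.mul_assoc]
      _ = U * (diagonal lam * M) := by rw [hUtU, Matrix.one_mul]
  have cUtU : ∀ {k : ℕ} (M : Matrix (Fin m) (Fin k) ℝ), Uᵀ * (U * M) = M := by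
    intro k M; rw [← Matrix.mul_assoc, hUtU, Matrix.one_mul]
  -- Xᵀ * A
  have hXtA : Xᵀ * A = U * (diagonal (fun j => g j * lam j) * Uᵀ) := by
    have h1 : Xᵀ = U * (diagonal g * (Uᵀ * Aᵀ)) := by
      rw [hXdef]
      simp only [Matrix.transpose_mul, Matrix.transpose_transpose, Matrix.diagonal_transpose,
        Matrix.mul_assoc]
    rw [h1]
    have h2 : Aᵀ * A = U * (diagonal lam * Uᵀ) := by rw [hspec, Matrix.mul_assoc]
    calc U * (diagonal g * (Uᵀ * Aᵀ)) * A = U * (diagonal g * (Uᵀ * (Aᵀ * A))) := by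
          simp only [Matrix.mul_assoc]
      _ = U * (diagonal g * (diagonal lam * Uᵀ)) := by rw [h2, cUtU]
      _ = U * (diagonal (fun j => g j * lam j) * Uᵀ) := by
          rw [← Matrix.mul_assoc (diagonal g), Matrix.diagonal_mul_diagonal]
  -- Xᵀ * X
  have h1 : Xᵀ = U * (diagonal g * (Uᵀ * Aᵀ)) := by
    rw [hXdef]
    simp only [Matrix.transpose_mul, Matrix.transpose_transpose, Matrix.diagonal_transpose,
      Matrix.mul_assoc]
  have hXtX : Xᵀ * X = U * (diagonal (fun j => g j * (lam j * g j)) * Uᵀ) := by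
    rw [h1, hXdef]
    calc U * (diagonal g * (Uᵀ * Aᵀ)) * (A * (U * (diagonal g * Uᵀ)))
        = U * (diagonal g * (Uᵀ * (Aᵀ * (A * (U * (diagonal g * Uᵀ)))))) := by
          simp only [Matrix.mul_assoc]
      _ = U * (diagonal g * (Uᵀ * (U * (diagonal lam * (diagonal g * Uᵀ))))) := by
          rw [hgram]
      _ = U * (diagonal g * (diagonal lam * (diagonal g * Uᵀ))) := by rw [cUtU]
      _ = U * (diagonal (fun j => g j * (lam j * g j)) * Uᵀ) := by
          rw [← Matrix.mul_assoc (diagonal lam), Matrix.diagonal_mul_diagonal,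
            ← Matrix.mul_assoc (diagonal g), Matrix.diagonal_mul_diagonal]
  refine ⟨X, ?_, ?_, ?_, ?_⟩
  · -- contraction
    intro u
    have e1 : (X *ᵥ u) ⬝ᵥ (X *ᵥ u) = u ⬝ᵥ ((Xᵀ * X) *ᵥ u) := by
      rw [dot_aux, mulVec_mulVec]
    set h : Fin m → ℝ := fun j => g j * (lam j * g j) with hh
    have hhle : ∀ j, h j ≤ 1 := by
      intro j
      rw [hh, hg]
      dsimp only
      split_ifs with hj
      · rw [show lam j * (Real.sqrt (lam j))⁻¹ = Real.sqrt (lam j) by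
          nth_rewrite 1 [← hsq j hj]; rw [mul_assoc, mul_inv_cancel₀ (hsqne j hj), mul_one]]
        rw [inv_mul_cancel₀ (hsqne j hj)]
      · simp
    have hhnn : ∀ j, 0 ≤ h j := by
      intro j
      rw [hh, hg]
      dsimp only
      split_ifs with hj
      · positivity
      · simp
    rw [e1, hXtX]
    set w : Fin m → ℝ := Uᵀ *ᵥ u with hw
    have e2 : u ⬝ᵥ ((U * (diagonal h * Uᵀ)) *ᵥ u) = w ⬝ᵥ (diagonal h *ᵥ w) := by
      rw [← Matrix.mulVec_mulVec, ← Matrix.mulVec_mulVec, hw, dot_aux Uᵀ u,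
        Matrix.transpose_transpose]
    have e3 : w ⬝ᵥ (diagonal h *ᵥ w) ≤ w ⬝ᵥ w := by
      simp only [dotProduct, Matrix.mulVec_diagonal]
      apply Finset.sum_le_sum
      intro j _
      have hb : h j * (w j * w j) ≤ 1 * (w j * w j) :=
        mul_le_mul_of_nonneg_right (hhle j) (mul_self_nonneg _)
      calc w j * (h j * w j) = h j * (w j * w j) := by ring
        _ ≤ 1 * (w j * w j) := hb
        _ = w j * w j := by ring
    have e4 : w ⬝ᵥ w = u ⬝ᵥ u := by
      rw [hw, ← dot_aux, mulVec_mulVec, hUUt, Matrix.one_mulVec]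
    rw [e2]
    exact e3.trans_eq e4
  · -- trace
    have htr : trace (Xᵀ * A) = ∑ j, g j * lam j := by
      rw [hXtA, ← Matrix.mul_assoc, trace_mul_comm, ← Matrix.mul_assoc, hUtU, Matrix.one_mul,
        trace_diagonal]
    rw [htr]
    unfold nucNorm
    refine Finset.sum_congr rfl fun j _ => ?_
    rw [← hlam, hg]
    dsimp only
    split_ifs with hj
    · rw [inv_mul_eq_div, div_eq_iff (hsqne j hj)]
      exact (hsq j hj).symm
    · push_neg at hj
      rw [zero_mul]
      exact (Real.sqrt_eq_zero'.mpr hj).symm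
  · intro Q hQ
    rw [hXdef, ← Matrix.mul_assoc, hQ]
  · -- right invariance
    intro R hR
    set g' : Fin m → ℝ := fun j => if 0 < lam j then (lam j * Real.sqrt (lam j))⁻¹ else 0 with hg'
    have hpt : ∀ j, g j = g' j * lam j := by
      intro j
      rw [hg, hg']
      dsimp only
      split_ifs with hj
      · have h0 : lam j ≠ 0 := ne_of_gt hj
        rw [mul_inv, mul_comm ((lam j)⁻¹), mul_assoc, inv_mul_cancel₀ h0, mul_one]
      · simp
    have hgg' : diagonal g = diagonal g' * diagonal lam := by
      rw [Matrix.diagonal_mul_diagonal]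
      exact congrArg _ (funext hpt)
    have hDlam : Uᵀ * (Aᵀ * A) = diagonal lam * Uᵀ := by
      rw [hspec, ← Matrix.mul_assoc, ← Matrix.mul_assoc, hUtU, Matrix.one_mul]
    have hAtAR : (Aᵀ * A) * R = Aᵀ * A := by rw [Matrix.mul_assoc, hR]
    calc X * R = A * (U * (diagonal g' * ((diagonal lam * Uᵀ) * R))) := by
          rw [hXdef, hgg']; simp only [Matrix.mul_assoc]
      _ = A * (U * (diagonal g' * (Uᵀ * ((Aᵀ * A) * R)))) := by
          rw [← hDlam, Matrix.mul_assoc Uᵀ (Aᵀ * A) R]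
      _ = A * (U * (diagonal g' * (Uᵀ * (Aᵀ * A)))) := by rw [hAtAR]
      _ = A * (U * (diagonal g' * (diagonal lam * Uᵀ))) := by rw [hDlam]
      _ = X := by rw [hXdef, hgg']; simp only [Matrix.mul_assoc]

lemma sum_sqrt_eig_congr {k : ℕ} {B C : Matrix (Fin k) (Fin k) ℝ}
    (hB : B.IsHermitian) (hC : C.IsHermitian) (h : B = C) :
    ∑ j, Real.sqrt (hB.eigenvalues j) = ∑ j, Real.sqrt (hC.eigenvalues j) := by
  subst h; rfl

lemma nucNorm_neg {p m : ℕ} (A : Matrix (Fin p) (Fin m) ℝ) : nucNorm (-A) = nucNorm A := by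
  unfold nucNorm
  exact sum_sqrt_eig_congr _ _ (by simp)

lemma nucNorm_add_le {p m : ℕ} (A B : Matrix (Fin p) (Fin m) ℝ) :
    nucNorm (A + B) ≤ nucNorm A + nucNorm B := by
  obtain ⟨X, hc, ht, -, -⟩ := exists_dual_achiever (A + B)
  have h : trace (Xᵀ * (A + B)) = trace (Xᵀ * A) + trace (Xᵀ * B) := by
    rw [Matrix.mul_add, trace_add]
  rw [← ht, h]
  exact add_le_add (trace_le_nucNorm A X hc) (trace_le_nucNorm B X hc)

lemma proj_fix {a b : ℕ} (M : Matrix (Fin a) (Fin b) ℝ) (P : Matrix (Fin a) (Fin a) ℝ)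
    (h : ∀ v : Fin a → ℝ, P *ᵥ v = v ↔ v ∈ Set.range M.mulVec) : P * M = M := by
  ext i j
  have hv : P *ᵥ (M *ᵥ Pi.single j 1) = M *ᵥ Pi.single j 1 := (h _).2 ⟨_, rfl⟩
  rw [Matrix.mulVec_mulVec] at hv
  have := congrFun hv i
  simpa [Matrix.mulVec_single] using this

/-- decomposability of the nuclear norm: if rank Γ = r then for all Δ,
‖Γ‖_* − ‖Γ+Δ‖_* ≤ ‖P_Γ(Δ)‖_* − ‖P_Γ^⊥(Δ)‖_*, and
‖Γ + P_Γ^⊥(Δ)‖_* = ‖Γ‖_* + ‖P_Γ^⊥(Δ)‖_*.  Here P₁, P₂ are the orthogonal projections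
onto the column spaces of Γ and Γᵀ (spans of the left/right singular vectors of Γ). -/
theorem nuclear_norm_decomposability {p m : ℕ}
    (Γ : Matrix (Fin p) (Fin m) ℝ) (r : ℕ) (hr : Γ.rank = r)
    (P₁ : Matrix (Fin p) (Fin p) ℝ) (P₂ : Matrix (Fin m) (Fin m) ℝ)
    (hP₁sym : P₁ᵀ = P₁) (hP₁idem : P₁ * P₁ = P₁)
    (hP₁range : ∀ v : Fin p → ℝ, P₁.mulVec v = v ↔ v ∈ Set.range Γ.mulVec)
    (hP₂sym : P₂ᵀ = P₂) (hP₂idem : P₂ * P₂ = P₂)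
    (hP₂range : ∀ v : Fin m → ℝ, P₂.mulVec v = v ↔ v ∈ Set.range Γᵀ.mulVec) :
    ∀ Δ : Matrix (Fin p) (Fin m) ℝ,
      nucNorm Γ - nucNorm (Γ + Δ) ≤ nucNorm (Pproj P₁ P₂ Δ) - nucNorm (Pperp P₁ P₂ Δ) ∧
      nucNorm (Γ + Pperp P₁ P₂ Δ) = nucNorm Γ + nucNorm (Pperp P₁ P₂ Δ) := by
  intro Δ
  set B := Pperp P₁ P₂ Δ with hBdef
  set C := Pproj P₁ P₂ Δ with hCdef
  -- basic projection algebra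
  have hQ1 : (1 - P₁) * (1 - P₁) = 1 - P₁ := by
    simp [Matrix.mul_sub, Matrix.sub_mul, hP₁idem]
  have hQ2 : (1 - P₂) * (1 - P₂) = 1 - P₂ := by
    simp [Matrix.mul_sub, Matrix.sub_mul, hP₂idem]
  have hP1perp : P₁ * (1 - P₁) = 0 := by
    rw [Matrix.mul_sub, hP₁idem, Matrix.mul_one, sub_self]
  have hperpP1 : (1 - P₁) * P₁ = 0 := by
    rw [Matrix.sub_mul, hP₁idem, Matrix.one_mul, sub_self]
  have hQ1t : (1 - P₁)ᵀ = 1 - P₁ := by rw [Matrix.transpose_sub, Matrix.transpose_one, hP₁sym]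
  have hQ2t : (1 - P₂)ᵀ = 1 - P₂ := by rw [Matrix.transpose_sub, Matrix.transpose_one, hP₂sym]
  have hP1Γ : P₁ * Γ = Γ := proj_fix Γ P₁ hP₁range
  have hΓP2 : Γ * P₂ = Γ := by
    have h := proj_fix Γᵀ P₂ hP₂range
    have h2 := congrArg Matrix.transpose h
    rw [Matrix.transpose_mul, Matrix.transpose_transpose, hP₂sym] at h2
    exact h2
  have hB1 : (1 - P₁) * B = B := by
    rw [hBdef]
    show (1 - P₁) * ((1 - P₁) * Δ * (1 - P₂)) = (1 - P₁) * Δ * (1 - P₂)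
    rw [← Matrix.mul_assoc, ← Matrix.mul_assoc, hQ1]
  have hB2 : B * (1 - P₂) = B := by
    rw [hBdef]
    show (1 - P₁) * Δ * (1 - P₂) * (1 - P₂) = (1 - P₁) * Δ * (1 - P₂)
    rw [Matrix.mul_assoc ((1 - P₁) * Δ), hQ2]
  -- achievers
  obtain ⟨X₁, hX₁c, hX₁t, hX₁l, hX₁r⟩ := exists_dual_achiever Γ
  obtain ⟨X₂, hX₂c, hX₂t, hX₂l, hX₂r⟩ := exists_dual_achiever B
  have e1 : P₁ * X₁ = X₁ := hX₁l P₁ hP1Γ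
  have e2 : X₁ * P₂ = X₁ := hX₁r P₂ hΓP2
  have e3 : (1 - P₁) * X₂ = X₂ := hX₂l _ hB1
  have e4 : X₂ * (1 - P₂) = X₂ := hX₂r _ hB2
  -- contraction of the sum
  have hc : ∀ u : Fin m → ℝ, ((X₁ + X₂) *ᵥ u) ⬝ᵥ ((X₁ + X₂) *ᵥ u) ≤ u ⬝ᵥ u := by
    intro u
    set a := X₁ *ᵥ (P₂ *ᵥ u) with hadef
    set b := X₂ *ᵥ ((1 - P₂) *ᵥ u) with hbdef
    have ha : X₁ *ᵥ u = a := by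
      rw [hadef, Matrix.mulVec_mulVec, e2]
    have hb : X₂ *ᵥ u = b := by
      rw [hbdef, Matrix.mulVec_mulVec, e4]
    have hXu : (X₁ + X₂) *ᵥ u = a + b := by rw [Matrix.add_mulVec, ha, hb]
    have hab : a ⬝ᵥ b = 0 := by
      have ha' : a = P₁ *ᵥ a := by
        rw [hadef, Matrix.mulVec_mulVec, Matrix.mulVec_mulVec, ← Matrix.mul_assoc, e1]
      have hb' : b = (1 - P₁) *ᵥ b := by
        rw [hbdef, Matrix.mulVec_mulVec, Matrix.mulVec_mulVec, ← Matrix.mul_assoc, e3]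
      rw [ha', hb', dot_aux, Matrix.mulVec_mulVec, hP₁sym, hP1perp]
      simp
    have haa : a ⬝ᵥ a ≤ (P₂ *ᵥ u) ⬝ᵥ (P₂ *ᵥ u) := hX₁c _
    have hbb : b ⬝ᵥ b ≤ ((1 - P₂) *ᵥ u) ⬝ᵥ ((1 - P₂) *ᵥ u) := hX₂c _
    have hsplit : (P₂ *ᵥ u) ⬝ᵥ (P₂ *ᵥ u) + ((1 - P₂) *ᵥ u) ⬝ᵥ ((1 - P₂) *ᵥ u) = u ⬝ᵥ u := by
      rw [dot_aux, Matrix.mulVec_mulVec, hP₂sym, hP₂idem]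
      rw [dot_aux, Matrix.mulVec_mulVec, hQ2t, hQ2]
      rw [← dotProduct_add, ← Matrix.add_mulVec]
      rw [show P₂ + (1 - P₂) = 1 by abel, Matrix.one_mulVec]
    have hexp : (a + b) ⬝ᵥ (a + b) = a ⬝ᵥ a + b ⬝ᵥ b := by
      rw [add_dotProduct, dotProduct_add, dotProduct_add, hab,
        dotProduct_comm b a, hab]
      ring
    rw [hXu, hexp]
    linarith
  -- trace identity
  have c1 : X₁ᵀ * B = 0 := by
    rw [← e1, ← hB1, Matrix.transpose_mul, hP₁sym, Matrix.mul_assoc, ← Matrix.mul_assoc P₁,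
      hP1perp, Matrix.zero_mul, Matrix.mul_zero]
  have c2 : X₂ᵀ * Γ = 0 := by
    rw [← e3, ← hP1Γ, Matrix.transpose_mul, hQ1t, Matrix.mul_assoc, ← Matrix.mul_assoc (1 - P₁),
      hperpP1, Matrix.zero_mul, Matrix.mul_zero]
  have ht : trace ((X₁ + X₂)ᵀ * (Γ + B)) = nucNorm Γ + nucNorm B := by
    rw [Matrix.transpose_add, Matrix.add_mul, Matrix.mul_add, Matrix.mul_add, c1, c2]
    rw [add_zero, zero_add, trace_add, hX₁t, hX₂t]
  have lower : nucNorm Γ + nucNorm B ≤ nucNorm (Γ + B) :=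
    ht ▸ trace_le_nucNorm (Γ + B) (X₁ + X₂) hc
  have upper : nucNorm (Γ + B) ≤ nucNorm Γ + nucNorm B := nucNorm_add_le Γ B
  have heq : nucNorm (Γ + B) = nucNorm Γ + nucNorm B := le_antisymm upper lower
  refine ⟨?_, heq⟩
  -- part 1
  have hsum : Γ + B = (Γ + Δ) + (-C) := by
    rw [hCdef, hBdef]
    show Γ + Pperp P₁ P₂ Δ = Γ + Δ + -(Δ - Pperp P₁ P₂ Δ)
    abel
  have h3 : nucNorm (Γ + B) ≤ nucNorm (Γ + Δ) + nucNorm C := by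
    rw [hsum]
    calc nucNorm ((Γ + Δ) + (-C)) ≤ nucNorm (Γ + Δ) + nucNorm (-C) := nucNorm_add_le _ _
      _ = nucNorm (Γ + Δ) + nucNorm C := by rw [nucNorm_neg]
  rw [heq] at h3
  linarith
end
end
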